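/- The family (1/√(n!(λ+δ)!)) a_{λ+δ}, indexed by partitions λ with at most n parts, is an orthonormal family with dense span in the space of alternating functions in the Segal-Bargmann space of ℂⁿ; equivalently, any alternating polynomial orthogonal to all a_{λ+δ} is zero, and ⟨a_{λ+δ}, a_{μ+δ}⟩ = δ_{λμ} · n!(λ+δ)! in the Segal-Bargmann inner product. -/

import Mathlib

open MvPolynomial

/-- The constant-coefficient differential operator `∂^μ = ∏ i, (∂/∂zᵢ)^(μ i)`. -/
noncomputable def diffOp {σ : Type*} [Fintype σ] [DecidableEq σ] (μ : σ →₀ ℕ) :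
    MvPolynomial σ ℂ →ₗ[ℂ] MvPolynomial σ ℂ :=
  (Finset.univ.toList.map fun i : σ => ((pderiv i : Derivation ℂ _ _).toLinearMap) ^ (μ i)).prod

/-- For `F = Σ c_μ z^μ`, the polynomial `F(∂)G = Σ c_μ ∂^μ G`. -/
noncomputable def applyDiff {σ : Type*} [Fintype σ] [DecidableEq σ]
    (F G : MvPolynomial σ ℂ) : MvPolynomial σ ℂ :=
  ∑ μ ∈ F.support, coeff μ F • (diffOp μ G)

/-- The Segal–Bargmann (Fischer) inner product on polynomials,
conjugate-linear in the first argument, with `⟨z^μ, z^ν⟩ = δ_{μν} μ!`. -/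
noncomputable def fischer {n : ℕ} (F G : MvPolynomial (Fin n) ℂ) : ℂ :=
  eval (0 : Fin n → ℂ) (applyDiff (MvPolynomial.map (starRingEnd ℂ) F) G)

/-- `a_ν(z) = det [zᵢ^(ν_j)]`. -/
noncomputable def aDet (n : ℕ) (ν : Fin n → ℕ) : MvPolynomial (Fin n) ℂ :=
  (Matrix.of fun i j : Fin n => (X i : MvPolynomial (Fin n) ℂ) ^ (ν j)).det

/-- `λ + δ` where `δ = (n-1, n-2, …, 0)`. -/
def shiftedExp (n : ℕ) (lam : Fin n → ℕ) : Fin n → ℕ := fun j => lam j + (n - 1 - (j : ℕ))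

/-! ### Auxiliary lemmas -/

theorem pderiv_pow_monomial {σ : Type*} [Fintype σ] [DecidableEq σ] (i : σ) (k : ℕ) (ν : σ →₀ ℕ) (c : ℂ) :
    (((pderiv i : Derivation ℂ (MvPolynomial σ ℂ) _).toLinearMap) ^ k) (monomial ν c)
      = monomial (ν - Finsupp.single i k) (c * ((ν i).descFactorial k : ℂ)) := by
  induction k with
  | zero => simp
  | succ k ih =>
      rw [pow_succ', Module.End.mul_apply, ih]
      show pderiv i _ = _
      rw [pderiv_monomial, tsub_tsub, ← Finsupp.single_add, Finsupp.tsub_apply,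
        Finsupp.single_eq_same, Nat.descFactorial_succ]
      congr 1
      push_cast
      ring

theorem list_diff_monomial {σ : Type*} [Fintype σ] [DecidableEq σ] (μ : σ →₀ ℕ) (ν : σ →₀ ℕ)
    (c : ℂ) (l : List σ) (hl : l.Nodup) :
    ((l.map fun i : σ => ((pderiv i : Derivation ℂ (MvPolynomial σ ℂ) _).toLinearMap) ^ (μ i)).prod)
        (monomial ν c)
      = monomial (ν - (l.map fun i => Finsupp.single i (μ i)).sum)
          (c * (l.map fun i => ((ν i).descFactorial (μ i) : ℂ)).prod) := by
  induction l with
  | nil => simp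
  | cons a l ih =>
      have ha : a ∉ l := (List.nodup_cons.mp hl).1
      have hl' : l.Nodup := (List.nodup_cons.mp hl).2
      simp only [List.map_cons, List.prod_cons, List.sum_cons, Module.End.mul_apply, ih hl']
      have hS : ((l.map fun i => Finsupp.single i (μ i)).sum) a = 0 := by
        rw [← Finsupp.applyAddHom_apply (M := ℕ) a, map_list_sum]
        apply List.sum_eq_zero
        intro x hx
        simp only [List.map_map, List.mem_map, Function.comp] at hx
        obtain ⟨i, hi, rfl⟩ := hx
        have hne : i ≠ a := fun h => ha (h ▸ hi)
        simp [Finsupp.applyAddHom_apply, Finsupp.single_apply, hne]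
      have hdesc : (ν - (l.map fun i => Finsupp.single i (μ i)).sum) a = ν a := by
        rw [Finsupp.tsub_apply, hS, Nat.sub_zero]
      rw [pderiv_pow_monomial, hdesc, tsub_tsub, add_comm]
      congr 1
      ring

theorem diffOp_monomial {σ : Type*} [Fintype σ] [DecidableEq σ] (μ ν : σ →₀ ℕ) (c : ℂ) :
    diffOp μ (monomial ν c)
      = monomial (ν - μ) (c * ∏ i : σ, ((ν i).descFactorial (μ i) : ℂ)) := by
  rw [diffOp, list_diff_monomial μ ν c _ Finset.univ.nodup_toList]
  rw [Finset.sum_map_toList, Finset.prod_map_toList, Finsupp.univ_sum_single]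

theorem eval_zero_monomial {n : ℕ} (ν : Fin n →₀ ℕ) (c : ℂ) :
    eval (0 : Fin n → ℂ) (monomial ν c) = if ν = 0 then c else 0 := by
  rw [eval_monomial]
  by_cases h : ν = 0
  · simp [h]
  · rw [if_neg h]
    obtain ⟨i, hi⟩ : ∃ i, ν i ≠ 0 := by
      by_contra hc
      push_neg at hc
      exact h (Finsupp.ext hc)
    rw [Finsupp.prod]
    have : (0 : Fin n → ℂ) i ^ ν i = 0 := by
      simp [zero_pow hi]
    rw [Finset.prod_eq_zero (Finsupp.mem_support_iff.mpr hi) this, mul_zero]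

theorem eval_zero_diffOp_monomial {n : ℕ} (μ ν : Fin n →₀ ℕ) (c : ℂ) :
    eval (0 : Fin n → ℂ) (diffOp μ (monomial ν c))
      = if ν = μ then c * ∏ i, ((μ i).factorial : ℂ) else 0 := by
  rw [diffOp_monomial, eval_zero_monomial]
  by_cases h : ν = μ
  · subst h
    simp [Nat.descFactorial_self]
  · rw [if_neg h]
    by_cases hle : ν - μ = 0
    · rw [if_pos hle]
      have hle' : ν ≤ μ := tsub_eq_zero_iff_le.mp hle
      obtain ⟨i, hi⟩ : ∃ i, ν i < μ i := by
        by_contra hc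
        push_neg at hc
        exact h (le_antisymm hle' fun i => hc i)
      have : ((ν i).descFactorial (μ i) : ℂ) = 0 := by
        rw [Nat.descFactorial_eq_zero_iff_lt.mpr hi]; simp
      rw [Finset.prod_eq_zero (Finset.mem_univ i) this, mul_zero]
    · rw [if_neg hle]

theorem eval_zero_diffOp {n : ℕ} (μ : Fin n →₀ ℕ) (G : MvPolynomial (Fin n) ℂ) :
    eval (0 : Fin n → ℂ) (diffOp μ G) = coeff μ G * ∏ i, ((μ i).factorial : ℂ) := by
  induction G using MvPolynomial.induction_on' with
  | monomial ν c =>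
      rw [eval_zero_diffOp_monomial, coeff_monomial]
      by_cases h : ν = μ <;> simp [h]
  | add p q hp hq =>
      rw [map_add, map_add, coeff_add, hp, hq]
      ring

theorem fischer_monomial_left {n : ℕ} (μ : Fin n →₀ ℕ) (c : ℂ) (G : MvPolynomial (Fin n) ℂ) :
    fischer (monomial μ c) G
      = (starRingEnd ℂ) c * (coeff μ G * ∏ i, ((μ i).factorial : ℂ)) := by
  rw [fischer, map_monomial, applyDiff]
  by_cases hc : (starRingEnd ℂ) c = 0
  · rw [hc, monomial_zero]; simp
  · rw [support_monomial, if_neg hc, Finset.sum_singleton, coeff_monomial, if_pos rfl,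
      smul_eq_C_mul, map_mul, eval_C, eval_zero_diffOp]

theorem applyDiff_eq_sum_subset {n : ℕ} (F G : MvPolynomial (Fin n) ℂ) (s : Finset (Fin n →₀ ℕ))
    (hs : F.support ⊆ s) : applyDiff F G = ∑ μ ∈ s, coeff μ F • diffOp μ G := by
  rw [applyDiff]
  apply Finset.sum_subset hs
  intro μ _ hμ
  rw [notMem_support_iff.mp hμ, zero_smul]

theorem fischer_add_left {n : ℕ} (F₁ F₂ G : MvPolynomial (Fin n) ℂ) :
    fischer (F₁ + F₂) G = fischer F₁ G + fischer F₂ G := by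
  classical
  rw [fischer, fischer, fischer, map_add]
  set A := MvPolynomial.map (starRingEnd ℂ) F₁
  set B := MvPolynomial.map (starRingEnd ℂ) F₂
  rw [applyDiff_eq_sum_subset (A + B) G (A.support ∪ B.support) support_add,
    applyDiff_eq_sum_subset A G (A.support ∪ B.support) Finset.subset_union_left,
    applyDiff_eq_sum_subset B G (A.support ∪ B.support) Finset.subset_union_right]
  simp only [A, B, map_add, coeff_add, add_smul, Finset.sum_add_distrib]

theorem fischer_sum_left {n : ℕ} {ι : Type*} (s : Finset ι) (f : ι → MvPolynomial (Fin n) ℂ)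
    (G : MvPolynomial (Fin n) ℂ) :
    fischer (∑ x ∈ s, f x) G = ∑ x ∈ s, fischer (f x) G := by
  induction s using Finset.cons_induction with
  | empty => simp [fischer, applyDiff]
  | cons a s ha ih => rw [Finset.sum_cons, Finset.sum_cons, fischer_add_left, ih]

/-- `S g = ∑ single i (g i)`. -/
noncomputable def S {n : ℕ} (g : Fin n → ℕ) : Fin n →₀ ℕ :=
  ∑ i, Finsupp.single i (g i)

@[simp] theorem S_apply {n : ℕ} (g : Fin n → ℕ) (j : Fin n) : S g j = g j := by
  rw [S, Finsupp.finset_sum_apply]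
  rw [Finset.sum_eq_single j (fun i _ hi => Finsupp.single_eq_of_ne' hi) (by simp)]
  simp

theorem S_coe {n : ℕ} (m : Fin n →₀ ℕ) : S ⇑m = m := Finsupp.univ_sum_single m

theorem S_inj {n : ℕ} {g g' : Fin n → ℕ} (h : S g = S g') : g = g' := by
  funext j
  have := DFunLike.congr_fun h j
  simpa using this

theorem aDet_eq {n : ℕ} (ν : Fin n → ℕ) :
    aDet n ν = ∑ σ : Equiv.Perm (Fin n),
      monomial (S (ν ∘ ⇑σ)) (((Equiv.Perm.sign σ : ℤ) : ℂ)) := by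
  rw [aDet, Matrix.det_apply]
  rw [← Equiv.sum_comp (Equiv.inv (Equiv.Perm (Fin n)))]
  apply Finset.sum_congr rfl
  intro σ _
  have h1 : (∏ i, (Matrix.of fun i j : Fin n => (X i : MvPolynomial (Fin n) ℂ) ^ (ν j))
      ((Equiv.inv (Equiv.Perm (Fin n)) σ) i) i) = monomial (S (ν ∘ ⇑σ)) 1 := by
    simp only [Equiv.inv_apply, Matrix.of_apply]
    rw [← Equiv.prod_comp σ (fun x => (X (σ⁻¹ x) : MvPolynomial (Fin n) ℂ) ^ ν x)]
    simp only [Equiv.symm_apply_apply, Equiv.Perm.inv_def]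
    rw [S, monomial_sum_index]
    simp [X_pow_eq_monomial, Function.comp]
  rw [h1, Equiv.inv_apply]
  rw [Equiv.Perm.sign_inv]
  simp [Units.smul_def, smul_monomial]

theorem fischer_aDet {n : ℕ} (ν : Fin n → ℕ) (G : MvPolynomial (Fin n) ℂ) :
    fischer (aDet n ν) G
      = (∏ i, ((ν i).factorial : ℂ)) *
          ∑ σ : Equiv.Perm (Fin n), ((Equiv.Perm.sign σ : ℤ) : ℂ) * coeff (S (ν ∘ ⇑σ)) G := by
  rw [aDet_eq, fischer_sum_left, Finset.mul_sum]
  apply Finset.sum_congr rfl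
  intro σ _
  rw [fischer_monomial_left, map_intCast]
  have h : (∏ i, (((S (ν ∘ ⇑σ)) i).factorial : ℂ)) = ∏ i, ((ν i).factorial : ℂ) := by
    simp only [S_apply, Function.comp]
    exact Equiv.prod_comp σ (fun i => ((ν i).factorial : ℂ))
  rw [h]
  ring

theorem strictAnti_shiftedExp {n : ℕ} {lam : Fin n → ℕ} (h : Antitone lam) :
    StrictAnti (shiftedExp n lam) := by
  intro j k hjk
  have h1 : lam k ≤ lam j := h hjk.le
  have h2 : (j : ℕ) < (k : ℕ) := hjk
  have h3 : (k : ℕ) < n := k.isLt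
  simp only [shiftedExp]
  omega

theorem strictAnti_spacing {n : ℕ} {ν : Fin n → ℕ} (hν : StrictAnti ν) (j k : Fin n)
    (h : (j : ℕ) ≤ k) : ν k + ((k : ℕ) - (j : ℕ)) ≤ ν j := by
  obtain ⟨d, hd⟩ : ∃ d, (k : ℕ) = j + d := ⟨k - j, by omega⟩
  induction d generalizing k with
  | zero =>
      have : j = k := Fin.ext (by omega)
      subst this; simp
  | succ d ih =>
      have hk' : (j : ℕ) + d < n := by have := k.isLt; omega
      have h1 := ih ⟨j + d, hk'⟩ (by simp) rfl
      have h2 : ν k < ν ⟨j + d, hk'⟩ := hν (by rw [Fin.lt_def]; simp; omega)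
      simp at h1
      omega

theorem strictAnti_ge {n : ℕ} {ν : Fin n → ℕ} (hν : StrictAnti ν) (j : Fin n) :
    n - 1 - (j : ℕ) ≤ ν j := by
  have hn : 0 < n := j.pos
  have := strictAnti_spacing hν j ⟨n - 1, by omega⟩ (by simp; omega)
  simp at this
  omega

theorem strictMono_perm_eq {n : ℕ} (π : Equiv.Perm (Fin n)) (h : StrictMono ⇑π) (i : Fin n) :
    π i = i := by
  let e : Fin n ≃o Fin n := StrictMono.orderIsoOfSurjective ⇑π h π.surjective
  have he : e i = π i := rfl
  have := Fin.coe_orderIso_apply e i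
  rw [he] at this
  exact Fin.ext this

theorem strictAnti_eq_of_comp {n : ℕ} {ν ν' : Fin n → ℕ} (hν : StrictAnti ν)
    (hν' : StrictAnti ν') (π : Equiv.Perm (Fin n)) (h : ν ∘ ⇑π = ν') : ν = ν' := by
  have hmono : StrictMono ⇑π := by
    intro a b hab
    have : ν' b < ν' a := hν' hab
    rw [← h] at this
    simp only [Function.comp] at this
    exact (hν.lt_iff_gt).mp this
  have hid : ∀ i, π i = i := strictMono_perm_eq π hmono
  funext i
  rw [← h]
  simp [hid i]

theorem sign_sq {n : ℕ} (σ : Equiv.Perm (Fin n)) :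
    ((Equiv.Perm.sign σ : ℤ) : ℂ) * ((Equiv.Perm.sign σ : ℤ) : ℂ) = 1 := by
  rcases Int.units_eq_one_or (Equiv.Perm.sign σ) with h | h <;> simp [h]

theorem mapDomain_S {n : ℕ} (τ : Equiv.Perm (Fin n)) (g : Fin n → ℕ) :
    Finsupp.mapDomain ⇑τ (S g) = S (g ∘ ⇑τ⁻¹) := by
  ext j
  conv_lhs => rw [show j = τ (τ⁻¹ j) by simp]
  rw [Finsupp.mapDomain_apply τ.injective]
  simp

theorem coeff_mapDomain_alternating {n : ℕ} {F : MvPolynomial (Fin n) ℂ}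
    (hF : ∀ σ : Equiv.Perm (Fin n), rename ⇑σ F = ((Equiv.Perm.sign σ : ℤ) : ℂ) • F)
    (σ : Equiv.Perm (Fin n)) (m : Fin n →₀ ℕ) :
    coeff (Finsupp.mapDomain ⇑σ m) F = ((Equiv.Perm.sign σ : ℤ) : ℂ) * coeff m F := by
  have h := coeff_rename_mapDomain ⇑σ σ.injective F m
  rw [hF σ, MvPolynomial.coeff_smul, smul_eq_mul] at h
  calc coeff (Finsupp.mapDomain ⇑σ m) F
      = (((Equiv.Perm.sign σ : ℤ) : ℂ) * ((Equiv.Perm.sign σ : ℤ) : ℂ)) *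
          coeff (Finsupp.mapDomain ⇑σ m) F := by rw [sign_sq, one_mul]
    _ = ((Equiv.Perm.sign σ : ℤ) : ℂ) *
          (((Equiv.Perm.sign σ : ℤ) : ℂ) * coeff (Finsupp.mapDomain ⇑σ m) F) := by ring
    _ = ((Equiv.Perm.sign σ : ℤ) : ℂ) * coeff m F := by rw [h]

/-! ### The main theorem -/

theorem aDet_orthonormal_basis_alternating (n : ℕ) :
    (∀ F : MvPolynomial (Fin n) ℂ,
        (∀ σ : Equiv.Perm (Fin n), rename ⇑σ F = ((Equiv.Perm.sign σ : ℤ) : ℂ) • F) →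
        (∀ lam : Fin n → ℕ, Antitone lam → fischer (aDet n (shiftedExp n lam)) F = 0) →
        F = 0) ∧
    (∀ lam mu : Fin n → ℕ, Antitone lam → Antitone mu →
        fischer (aDet n (shiftedExp n lam)) (aDet n (shiftedExp n mu)) =
          if lam = mu then
            (n.factorial : ℂ) * ∏ i, ((shiftedExp n lam i).factorial : ℂ)
          else 0) := by
  constructor
  · -- Part 1: density
    intro F hF horth
    apply MvPolynomial.ext
    intro m
    rw [coeff_zero]
    by_cases hinj : Function.Injective ⇑m
    · -- injective exponents: sort to strictly decreasing
      set g : Fin n → ℕ := ⇑m with hg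
      set σ0 := Tuple.sort g with hσ0
      have hmono : StrictMono (g ∘ ⇑σ0) :=
        (Tuple.monotone_sort g).strictMono_of_injective (hinj.comp σ0.injective)
      set π : Equiv.Perm (Fin n) := Fin.revPerm.trans σ0 with hπ
      set ν : Fin n → ℕ := g ∘ ⇑π with hν
      have hanti : StrictAnti ν := by
        intro a b hab
        have : Fin.rev b < Fin.rev a := Fin.rev_lt_rev.mpr hab
        exact hmono this
      -- build the partition
      have hge : ∀ j : Fin n, n - 1 - (j : ℕ) ≤ ν j := strictAnti_ge hanti
      set lam : Fin n → ℕ := fun j => ν j - (n - 1 - (j : ℕ)) with hlam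
      have hlam_anti : Antitone lam := by
        intro j k hjk
        rcases eq_or_lt_of_le hjk with h | h
        · rw [h]
        · have hs := strictAnti_spacing hanti j k (le_of_lt h)
          have h1 : (j : ℕ) < (k : ℕ) := h
          have h2 : (k : ℕ) < n := k.isLt
          simp only [hlam]
          omega
      have hshift : shiftedExp n lam = ν := by
        funext j
        have := hge j
        simp only [shiftedExp, hlam]
        omega
      have h0 := horth lam hlam_anti
      rw [hshift, fischer_aDet] at h0
      -- each coefficient in the sum equals sign σ * coeff (S ν) F
      have hc : ∀ σ : Equiv.Perm (Fin n),
          coeff (S (ν ∘ ⇑σ)) F = ((Equiv.Perm.sign σ : ℤ) : ℂ) * coeff (S ν) F := by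
        intro σ
        have hmap : Finsupp.mapDomain ⇑σ⁻¹ (S ν) = S (ν ∘ ⇑σ) := by
          rw [mapDomain_S]; simp
        rw [← hmap, coeff_mapDomain_alternating hF σ⁻¹, Equiv.Perm.sign_inv]
      have hsum : (∑ σ : Equiv.Perm (Fin n),
          ((Equiv.Perm.sign σ : ℤ) : ℂ) * coeff (S (ν ∘ ⇑σ)) F)
            = (n.factorial : ℂ) * coeff (S ν) F := by
        rw [Finset.sum_congr rfl fun σ _ => by rw [hc σ, ← mul_assoc, sign_sq, one_mul]]
        rw [Finset.sum_const, Finset.card_univ, Fintype.card_perm, Fintype.card_fin, nsmul_eq_mul]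
      rw [hsum] at h0
      have hprod : (∏ i, ((ν i).factorial : ℂ)) ≠ 0 :=
        Finset.prod_ne_zero_iff.mpr fun i _ =>
          Nat.cast_ne_zero.mpr (Nat.factorial_ne_zero _)
      have hfact : (n.factorial : ℂ) ≠ 0 := Nat.cast_ne_zero.mpr (Nat.factorial_ne_zero _)
      have hSν : coeff (S ν) F = 0 := by
        rcases mul_eq_zero.mp h0 with h | h
        · exact absurd h hprod
        · rcases mul_eq_zero.mp h with h' | h'
          · exact absurd h' hfact
          · exact h'
      -- conclude for m
      have hm : m = S (ν ∘ ⇑π⁻¹) := by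
        rw [← S_coe m]
        congr 1
        funext x
        simp [hν, hg, Function.comp]
      rw [hm]
      have hmap : Finsupp.mapDomain ⇑π (S ν) = S (ν ∘ ⇑π⁻¹) := mapDomain_S π ν
      rw [← hmap, coeff_mapDomain_alternating hF π, hSν, mul_zero]
    · -- non-injective: a transposition kills the coefficient
      rw [Function.not_injective_iff] at hinj
      obtain ⟨i, j, hij, hne⟩ := hinj
      set τ : Equiv.Perm (Fin n) := Equiv.swap i j with hτ
      have hfix : Finsupp.mapDomain ⇑τ m = m := by
        rw [← S_coe m, mapDomain_S]
        congr 1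
        funext k
        simp only [Function.comp]
        rcases eq_or_ne k i with rfl | hki
        · rw [hτ]; simp [Equiv.swap_inv, Equiv.swap_apply_left, hij]
        · rcases eq_or_ne k j with rfl | hkj
          · rw [hτ]; simp [Equiv.swap_inv, Equiv.swap_apply_right, hij]
          · rw [hτ]; simp [Equiv.swap_inv, Equiv.swap_apply_of_ne_of_ne hki hkj]
      have h := coeff_mapDomain_alternating hF τ m
      rw [hfix, hτ, Equiv.Perm.sign_swap hne] at h
      simp only [Units.val_neg, Units.val_one, Int.cast_neg, Int.cast_one, neg_mul, one_mul] at h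
      linear_combination h / 2
  · -- Part 2: orthogonality relations
    intro lam mu hlam hmu
    set ν := shiftedExp n lam with hν
    set ν' := shiftedExp n mu with hν'
    have hanti : StrictAnti ν := strictAnti_shiftedExp hlam
    have hanti' : StrictAnti ν' := strictAnti_shiftedExp hmu
    rw [fischer_aDet]
    by_cases heq : lam = mu
    · subst heq
      rw [if_pos rfl]
      have hc : ∀ σ : Equiv.Perm (Fin n),
          coeff (S (ν ∘ ⇑σ)) (aDet n ν) = ((Equiv.Perm.sign σ : ℤ) : ℂ) := by
        intro σ
        rw [aDet_eq, MvPolynomial.coeff_sum]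
        rw [Finset.sum_eq_single σ]
        · rw [coeff_monomial, if_pos rfl]
        · intro τ _ hτσ
          rw [coeff_monomial, if_neg]
          intro hcon
          apply hτσ
          have h1 := S_inj hcon
          apply Equiv.ext
          intro x
          exact hanti.injective (congrFun h1 x)
        · intro hcon
          exact absurd (Finset.mem_univ σ) hcon
      rw [Finset.sum_congr rfl fun σ _ => by rw [hc σ, sign_sq]]
      rw [Finset.sum_const, Finset.card_univ, Fintype.card_perm, Fintype.card_fin, nsmul_eq_mul, mul_one]
      ring
    · rw [if_neg heq]
      have hc : ∀ σ : Equiv.Perm (Fin n), coeff (S (ν ∘ ⇑σ)) (aDet n ν') = 0 := by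
        intro σ
        rw [aDet_eq, MvPolynomial.coeff_sum]
        apply Finset.sum_eq_zero
        intro τ _
        rw [coeff_monomial, if_neg]
        intro hcon
        have hfun : ν' ∘ ⇑τ = ν ∘ ⇑σ := S_inj hcon
        have hcomp : ν ∘ ⇑(τ⁻¹.trans σ) = ν' := by
          funext x
          have := congrFun hfun (τ⁻¹ x)
          simp only [Function.comp] at this ⊢
          simp only [Equiv.trans_apply]
          rw [← this]
          simp
        have := strictAnti_eq_of_comp hanti hanti' (τ⁻¹.trans σ) hcomp
        apply heq
        funext j
        have hj := congrFun this j
        simp only [hν, hν', shiftedExp] at hj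
        omega
      rw [Finset.sum_congr rfl fun σ _ => by rw [hc σ, mul_zero]]
      simp
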